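/- Fix λ > 0 and β > 0 and set x_{1,2} = (1/(λ²β))·[(1+β)λ + 2 ∓ 2√(λ²β + λ(β+1) + 1)]. Then the quadratic expression Q(x) = −(β−1)² + 2β[(1+β)λ + 2]x − β²λ²x² is nonnegative exactly for x ∈ [x₁, x₂], and the density p(x) = (1/(2π))·√(Q(x))/(x(x+1)) on [x₁, x₂] plus an atom of mass max(1−β,0) at 0 integrates to 1. -/

import Mathlib

open Real MeasureTheory Set intervalIntegral

private lemma contSqrtPoly (a b : ℝ) :
    Continuous (fun x : ℝ => Real.sqrt ((x - a) * (b - x))) :=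
  Real.continuous_sqrt.comp (by continuity)

private lemma integrable_aux {a b : ℝ} (p : ℝ) (hab : a < b) (hpa : p ≤ a) :
    IntervalIntegrable (fun x => Real.sqrt ((x - a) * (b - x)) / (x - p)) volume a b := by
  rcases eq_or_lt_of_le hpa with hp | hp
  · subst hp
    have h0 : IntervalIntegrable (fun x : ℝ => x ^ (-(1/2) : ℝ)) volume 0 (b - p) :=
      intervalIntegral.intervalIntegrable_rpow' (by norm_num)
    have h1 := h0.comp_sub_right p
    rw [zero_add, sub_add_cancel] at h1
    have hg : IntervalIntegrable (fun x : ℝ => Real.sqrt (b - p) * (x - p) ^ (-(1/2) : ℝ))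
        volume p b := h1.const_mul _
    apply hg.mono_fun
    · exact ((contSqrtPoly p b).measurable.div
        (measurable_id.sub measurable_const)).aestronglyMeasurable
    · filter_upwards [MeasureTheory.ae_restrict_mem measurableSet_uIoc] with x hx
      rw [Set.uIoc_of_le hab.le] at hx
      have hxp : 0 < x - p := by linarith [hx.1]
      have hbx : 0 ≤ b - x := by linarith [hx.2]
      have hne : Real.sqrt (x - p) ≠ 0 := by positivity
      have h2 : Real.sqrt ((x - p) * (b - x)) / (x - p)
          = Real.sqrt (b - x) * (x - p) ^ (-(1/2) : ℝ) := by
        have e3 : Real.sqrt (x-p) * Real.sqrt (x-p) = x - p := Real.mul_self_sqrt hxp.le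
        rw [Real.sqrt_mul hxp.le, Real.rpow_neg hxp.le, ← Real.sqrt_eq_rpow]
        field_simp
        linear_combination Real.sqrt (b-x) * e3
      rw [h2]
      simp only [norm_mul, Real.norm_eq_abs]
      have h3 : |Real.sqrt (b - x)| ≤ |Real.sqrt (b - p)| := by
        rw [abs_of_nonneg (Real.sqrt_nonneg _), abs_of_nonneg (Real.sqrt_nonneg _)]
        apply Real.sqrt_le_sqrt; linarith [hx.1]
      exact mul_le_mul_of_nonneg_right h3 (abs_nonneg _)
  · apply ContinuousOn.intervalIntegrable
    apply ContinuousOn.div (contSqrtPoly a b).continuousOn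
      (continuous_sub_right p).continuousOn
    intro x hx
    rw [Set.uIcc_of_le hab.le] at hx
    have : p < x := lt_of_lt_of_le hp hx.1
    exact sub_ne_zero.mpr this.ne'

private lemma sqrt_integral {a b : ℝ} (p : ℝ) (hab : a < b) (hpa : p ≤ a) :
    ∫ x in a..b, Real.sqrt ((x - a) * (b - x)) / (x - p)
      = Real.pi * ((a + b) / 2 - p - Real.sqrt ((a - p) * (b - p))) := by
  have hba : 0 < b - a := by linarith
  set c₂ := Real.sqrt ((a - p) * (b - p)) with hc₂
  set u : ℝ → ℝ := fun y => ((a + b - 2 * p) * y - 2 * a * b + (a + b) * p) / ((b - a) * (y - p))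
    with hu_def
  set G : ℝ → ℝ := fun y => Real.sqrt ((y - a) * (b - y))
      + ((a + b) / 2 - p) * Real.arcsin ((2 * y - (a + b)) / (b - a))
      - c₂ * Real.arcsin (u y) with hG
  have hcont : ContinuousOn G (Set.Icc a b) := by
    apply ContinuousOn.sub
    · apply ContinuousOn.add (contSqrtPoly a b).continuousOn
      exact (continuous_const.mul (Real.continuous_arcsin.comp (by continuity))).continuousOn
    · rcases eq_or_lt_of_le hpa with hp | hp
      · have hc0 : c₂ = 0 := by rw [hc₂, ← hp, sub_self, zero_mul, Real.sqrt_zero]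
        simp only [hc0, zero_mul]
        exact continuousOn_const
      · apply ContinuousOn.mul continuousOn_const
        apply Real.continuous_arcsin.comp_continuousOn
        apply ContinuousOn.div
          (show Continuous fun y : ℝ => (a + b - 2 * p) * y - 2 * a * b + (a + b) * p by
            continuity).continuousOn
          (show Continuous fun y : ℝ => (b - a) * (y - p) by continuity).continuousOn
        intro x hx
        have : p < x := lt_of_lt_of_le hp hx.1
        have h1 : 0 < (b - a) * (x - p) := by nlinarith
        exact h1.ne'
  have hderiv : ∀ x ∈ Set.Ioo a b,
      HasDerivWithinAt G (Real.sqrt ((x - a) * (b - x)) / (x - p)) (Set.Ioi x) x := by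
    intro x hx
    obtain ⟨hax, hxb⟩ := hx
    have hP : 0 < (x - a) * (b - x) := mul_pos (by linarith) (by linarith)
    set S := Real.sqrt ((x - a) * (b - x)) with hS_def
    have hS : 0 < S := Real.sqrt_pos.mpr hP
    have hS2 : S ^ 2 = (x - a) * (b - x) := Real.sq_sqrt hP.le
    have hxp : 0 < x - p := by linarith
    -- derivative of sqrt part
    have h1 : HasDerivAt (fun y => Real.sqrt ((y - a) * (b - y))) ((a + b - 2 * x) / (2 * S)) x := by
      have hinner : HasDerivAt (fun y : ℝ => (y - a) * (b - y)) (a + b - 2 * x) x := by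
        have := ((hasDerivAt_id x).sub_const a).mul ((hasDerivAt_const x b).sub (hasDerivAt_id x))
        refine this.congr_deriv ?_
        simp only [id_eq, Pi.sub_apply]
        ring
      have := (Real.hasDerivAt_sqrt hP.ne').comp x hinner
      refine this.congr_deriv ?_
      field_simp
      try ring
    -- derivative of first arcsin part
    have h2 : HasDerivAt (fun y => Real.arcsin ((2 * y - (a + b)) / (b - a))) (1 / S) x := by
      have hv : HasDerivAt (fun y : ℝ => (2 * y - (a + b)) / (b - a)) (2 / (b - a)) x := by
        have := (((hasDerivAt_id x).const_mul 2).sub_const (a + b)).div_const (b - a)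
        simpa using this
      have hvm : (-1 : ℝ) < (2 * x - (a + b)) / (b - a) := by
        rw [lt_div_iff₀ hba]; linarith
      have hvp : (2 * x - (a + b)) / (b - a) < 1 := by
        rw [div_lt_iff₀ hba]; linarith
      have := (Real.hasDerivAt_arcsin hvm.ne' hvp.ne).comp x hv
      refine this.congr_deriv ?_
      have hval : 1 - ((2 * x - (a + b)) / (b - a)) ^ 2
          = (2 / (b - a)) ^ 2 * ((x - a) * (b - x)) := by
        field_simp
        ring
      rw [hval, Real.sqrt_mul (by positivity), Real.sqrt_sq (by positivity)]
      field_simp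
      try ring
    -- derivative of second arcsin part
    have h3 : HasDerivAt (fun y => c₂ * Real.arcsin (u y))
        ((a - p) * (b - p) / ((x - p) * S)) x := by
      rcases eq_or_lt_of_le hpa with hp | hp
      · have hc0 : c₂ = 0 := by rw [hc₂, ← hp, sub_self, zero_mul, Real.sqrt_zero]
        have hfun : (fun y => c₂ * Real.arcsin (u y)) = fun _ => (0 : ℝ) := by
          funext y; rw [hc0, zero_mul]
        have hval : (a - p) * (b - p) / ((x - p) * S) = 0 := by
          rw [← hp, sub_self, zero_mul, zero_div]
        rw [hfun, hval]
        exact hasDerivAt_const x 0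
      · have hcpos : 0 < (a - p) * (b - p) := mul_pos (by linarith) (by linarith)
        have hc2 : c₂ ^ 2 = (a - p) * (b - p) := Real.sq_sqrt hcpos.le
        have hc2pos : 0 < c₂ := Real.sqrt_pos.mpr hcpos
        have hden : (b - a) * (x - p) ≠ 0 := (mul_pos hba hxp).ne'
        have hnum : HasDerivAt (fun y : ℝ => (a + b - 2 * p) * y - 2 * a * b + (a + b) * p)
            (a + b - 2 * p) x := by
          have := (((hasDerivAt_id x).const_mul (a + b - 2 * p)).sub_const
            (2 * a * b)).add_const ((a + b) * p)
          simpa using this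
        have hdenf : HasDerivAt (fun y : ℝ => (b - a) * (y - p)) (b - a) x := by
          have := ((hasDerivAt_id x).sub_const p).const_mul (b - a)
          simpa using this
        have hu : HasDerivAt u
            (((a + b - 2 * p) * ((b - a) * (x - p)) -
              ((a + b - 2 * p) * x - 2 * a * b + (a + b) * p) * (b - a)) /
              ((b - a) * (x - p)) ^ 2) x := hnum.div hdenf hden
        have huval : 1 - (u x) ^ 2
            = (2 / ((b - a) * (x - p))) ^ 2 * ((a - p) * (b - p) * ((x - a) * (b - x))) := by
          rw [hu_def]
          field_simp
          ring
        have h1u : 0 < 1 - (u x) ^ 2 := by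
          rw [huval]; positivity
        have hum : u x ≠ -1 := by
          intro h; rw [h] at h1u; norm_num at h1u
        have hup : u x ≠ 1 := by
          intro h; rw [h] at h1u; norm_num at h1u
        have := ((Real.hasDerivAt_arcsin hum hup).comp x hu).const_mul c₂
        refine this.congr_deriv ?_
        rw [huval, Real.sqrt_mul (by positivity), Real.sqrt_sq (by positivity),
          Real.sqrt_mul hcpos.le, ← hS_def, ← hc₂]
        field_simp
        ring
    have total := (h1.add (h2.const_mul ((a + b) / 2 - p))).sub h3
    have heq : (a + b - 2 * x) / (2 * S) + ((a + b) / 2 - p) * (1 / S)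
        - (a - p) * (b - p) / ((x - p) * S) = S / (x - p) := by
      field_simp
      linear_combination (-2) * hS2
    rw [heq] at total
    exact total.hasDerivWithinAt
  have key := intervalIntegral.integral_eq_sub_of_hasDeriv_right_of_le hab.le hcont hderiv
    (integrable_aux p hab hpa)
  rw [key]
  -- evaluate endpoints
  have hGa : G a = ((a + b) / 2 - p) * (-(Real.pi / 2)) - c₂ * (-(Real.pi / 2)) := by
    rw [hG]
    have e1 : Real.sqrt ((a - a) * (b - a)) = 0 := by simp
    have e2 : (2 * a - (a + b)) / (b - a) = -1 := by
      rw [div_eq_iff hba.ne']; ring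
    have e3 : c₂ * Real.arcsin (u a) = c₂ * (-(Real.pi / 2)) := by
      rcases eq_or_lt_of_le hpa with hp | hp
      · have hc0 : c₂ = 0 := by rw [hc₂, ← hp, sub_self, zero_mul, Real.sqrt_zero]
        rw [hc0, zero_mul, zero_mul]
      · have hden : (b - a) * (a - p) ≠ 0 := (mul_pos hba (by linarith)).ne'
        have : u a = -1 := by
          rw [hu_def]
          show ((a + b - 2 * p) * a - 2 * a * b + (a + b) * p) / ((b - a) * (a - p)) = -1
          rw [div_eq_iff hden]; ring
        rw [this, Real.arcsin_neg_one]
    simp only [e1, e2, Real.arcsin_neg_one, e3]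
    ring
  have hGb : G b = ((a + b) / 2 - p) * (Real.pi / 2) - c₂ * (Real.pi / 2) := by
    rw [hG]
    have e1 : Real.sqrt ((b - a) * (b - b)) = 0 := by simp
    have e2 : (2 * b - (a + b)) / (b - a) = 1 := by
      rw [div_eq_iff hba.ne']; ring
    have e3 : c₂ * Real.arcsin (u b) = c₂ * (Real.pi / 2) := by
      rcases eq_or_lt_of_le hpa with hp | hp
      · have hc0 : c₂ = 0 := by rw [hc₂, ← hp, sub_self, zero_mul, Real.sqrt_zero]
        rw [hc0, zero_mul, zero_mul]
      · have hden : (b - a) * (b - p) ≠ 0 := (mul_pos hba (by linarith)).ne'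
        have : u b = 1 := by
          rw [hu_def]
          show ((a + b - 2 * p) * b - 2 * a * b + (a + b) * p) / ((b - a) * (b - p)) = 1
          rw [div_eq_iff hden]; ring
        rw [this, Real.arcsin_one]
    simp only [e1, e2, Real.arcsin_one, e3]
    ring
  rw [hGa, hGb]
  ring

theorem stmt12 (lam β : ℝ) (hlam : 0 < lam) (hβ : 0 < β) :
    let Q : ℝ → ℝ := fun x => -(β - 1) ^ 2 + 2 * β * ((1 + β) * lam + 2) * x -
      β ^ 2 * lam ^ 2 * x ^ 2
    let x₁ := (1 / (lam ^ 2 * β)) *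
      ((1 + β) * lam + 2 - 2 * Real.sqrt (lam ^ 2 * β + lam * (β + 1) + 1))
    let x₂ := (1 / (lam ^ 2 * β)) *
      ((1 + β) * lam + 2 + 2 * Real.sqrt (lam ^ 2 * β + lam * (β + 1) + 1))
    (∀ x : ℝ, 0 ≤ Q x ↔ x ∈ Set.Icc x₁ x₂) ∧
    (∫ x in Set.Icc x₁ x₂, (1 / (2 * Real.pi)) * Real.sqrt (Q x) / (x * (x + 1))) +
      max (1 - β) 0 = 1 := by
  intro Q x₁ x₂
  have hD : (0:ℝ) < lam ^ 2 * β + lam * (β + 1) + 1 := by positivity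
  set s := Real.sqrt (lam ^ 2 * β + lam * (β + 1) + 1) with hs_def
  have hs2 : s ^ 2 = lam ^ 2 * β + lam * (β + 1) + 1 := Real.sq_sqrt hD.le
  have hs : 0 < s := Real.sqrt_pos.mpr hD
  have hQdef : ∀ x : ℝ, Q x = -(β - 1) ^ 2 + 2 * β * ((1 + β) * lam + 2) * x -
      β ^ 2 * lam ^ 2 * x ^ 2 := fun _ => rfl
  have hx1 : x₁ = (1 / (lam ^ 2 * β)) * ((1 + β) * lam + 2 - 2 * s) := rfl
  have hx2 : x₂ = (1 / (lam ^ 2 * β)) * ((1 + β) * lam + 2 + 2 * s) := rfl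
  have hl2 : (0:ℝ) < lam ^ 2 * β := by positivity
  have hab : x₁ < x₂ := by
    have e : x₂ - x₁ = 4 * s / (lam ^ 2 * β) := by rw [hx1, hx2]; ring
    nlinarith [show (0:ℝ) < 4 * s / (lam ^ 2 * β) by positivity]
  have hT : 2 * s ≤ (1 + β) * lam + 2 := by
    nlinarith [hs2, hs, sq_nonneg (lam * (β - 1)), mul_pos hlam hβ]
  have ha0 : 0 ≤ x₁ := by
    rw [hx1]; apply mul_nonneg (by positivity); linarith
  have hQfact : ∀ x : ℝ, Q x = β ^ 2 * lam ^ 2 * ((x - x₁) * (x₂ - x)) := by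
    intro x
    rw [hQdef, hx1, hx2]
    field_simp
    linear_combination (-4) * hs2
  refine ⟨?_, ?_⟩
  · intro x
    rw [hQfact x]
    have hbl : (0:ℝ) < β ^ 2 * lam ^ 2 := by positivity
    constructor
    · intro h
      constructor
      · by_contra hc; push_neg at hc
        have h1 : (x - x₁) * (x₂ - x) < 0 :=
          mul_neg_of_neg_of_pos (by linarith) (by linarith)
        nlinarith [mul_neg_of_pos_of_neg hbl h1]
      · by_contra hc; push_neg at hc
        have h1 : (x - x₁) * (x₂ - x) < 0 :=
          mul_neg_of_pos_of_neg (by linarith) (by linarith)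
        nlinarith [mul_neg_of_pos_of_neg hbl h1]
    · rintro ⟨h1, h2⟩
      exact mul_nonneg hbl.le (mul_nonneg (by linarith) (by linarith))
  · rw [MeasureTheory.integral_Icc_eq_integral_Ioc, ← intervalIntegral.integral_of_le hab.le]
    have key : (∫ x in x₁..x₂, (1 / (2 * Real.pi)) * Real.sqrt (Q x) / (x * (x + 1)))
        = β * lam / (2 * Real.pi) *
          ((∫ x in x₁..x₂, Real.sqrt ((x - x₁) * (x₂ - x)) / (x - 0)) -
           ∫ x in x₁..x₂, Real.sqrt ((x - x₁) * (x₂ - x)) / (x - (-1))) := by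
      rw [← intervalIntegral.integral_sub (integrable_aux 0 hab ha0)
        (integrable_aux (-1) hab (by linarith)), ← intervalIntegral.integral_const_mul]
      apply intervalIntegral.integral_congr
      intro x hx
      rw [Set.uIcc_of_le hab.le] at hx
      have hsq : Real.sqrt (Q x) = β * lam * Real.sqrt ((x - x₁) * (x₂ - x)) := by
        rw [hQfact x, show β ^ 2 * lam ^ 2 * ((x - x₁) * (x₂ - x))
          = (β * lam) ^ 2 * ((x - x₁) * (x₂ - x)) by ring,
          Real.sqrt_mul (sq_nonneg _), Real.sqrt_sq (by positivity)]
      rcases eq_or_lt_of_le (ha0.trans hx.1) with h0 | h0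
      · have hx10 : x₁ = 0 := le_antisymm (h0 ▸ hx.1) ha0
        subst h0
        dsimp only
        rw [hx10]
        norm_num
      · have hx1p : (0:ℝ) < x + 1 := by linarith
        dsimp only
        rw [hsq, sub_zero, sub_neg_eq_add]
        field_simp
        ring
    rw [key, sqrt_integral 0 hab ha0, sqrt_integral (-1) hab (by linarith)]
    have hlb : (0:ℝ) < lam * β := mul_pos hlam hβ
    have hprod1 : (x₁ - 0) * (x₂ - 0) = ((β - 1) / (lam * β)) ^ 2 := by
      rw [hx1, hx2]
      field_simp
      linear_combination (-4) * hs2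
    have hprod2 : (x₁ - (-1)) * (x₂ - (-1)) = ((β + 1 + lam * β) / (lam * β)) ^ 2 := by
      rw [hx1, hx2]
      field_simp
      linear_combination (-4) * hs2
    have hsq1 : Real.sqrt ((x₁ - 0) * (x₂ - 0)) = |β - 1| / (lam * β) := by
      rw [hprod1, Real.sqrt_sq_eq_abs, abs_div, abs_of_pos hlb]
    have hsq2 : Real.sqrt ((x₁ - (-1)) * (x₂ - (-1))) = (β + 1 + lam * β) / (lam * β) := by
      rw [hprod2, Real.sqrt_sq (by positivity)]
    rw [hsq1, hsq2]
    rcases le_total β 1 with hb1 | hb1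
    · rw [abs_of_nonpos (by linarith), max_eq_left (by linarith)]
      field_simp
      ring
    · rw [abs_of_nonneg (by linarith), max_eq_right (by linarith)]
      field_simp
      ring
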